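/- Let G be a finite simple graph with a simplicial vertex v such that {v} ⊊ N_G[v] ⊊ V(G), and suppose for each u ∈ N_G(v) we are given an acyclic matching V_u on I(G − N_G[u]). Then there exists an acyclic matching V on I(G) such that: (i) the number of critical 0-simplices equals 1 + k, where k is the number of universal vertices of G; (ii) the number of critical 1-simplices equals Σ_{u ∈ N_G(v)} f₀^{V_u}(I(G − N_G[u])) − (|N_G(v)| − k); and (iii) for t ≥ 2, the number of critical t-simplices equals Σ_{u ∈ N_G(v)} f_{t−1}^{V_u}(I(G − N_G[u])). -/

import Mathlib

open Finset

/-- A (nonempty-face) abstract simplicial complex on vertex set `V`: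
faces are nonempty finite sets, closed under nonempty subsets. -/
def IsComplex {V : Type*} (X : Set (Finset V)) : Prop :=
  (∀ s ∈ X, s.Nonempty) ∧ ∀ ⦃s t : Finset V⦄, s ∈ X → t ⊆ s → t.Nonempty → t ∈ X

/-- Nonempty independent sets of `G` avoiding the vertex set `U`;
this is the set of simplices of the independence complex `I(G − U)`. -/
def avoidIndep {V : Type*} (G : SimpleGraph V) (U : Set V) : Set (Finset V) :=
  {s | s.Nonempty ∧ (∀ x ∈ s, x ∉ U) ∧ ∀ x ∈ s, ∀ y ∈ s, ¬ G.Adj x y}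

/-- The independence complex of `G` (set of nonempty simplices). -/
def indepComplex {V : Type*} (G : SimpleGraph V) : Set (Finset V) :=
  avoidIndep G ∅

/-- A matching on the Hasse diagram of a simplicial complex `X`. -/
structure IsMatching {V : Type*} (X : Set (Finset V)) (M : Set (Finset V × Finset V)) : Prop where
  left_mem : ∀ p ∈ M, p.1 ∈ X
  right_mem : ∀ p ∈ M, p.2 ∈ X
  subset : ∀ p ∈ M, p.1 ⊆ p.2
  card_eq : ∀ p ∈ M, p.2.card = p.1.card + 1
  eq_of_shared : ∀ p ∈ M, ∀ q ∈ M,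
    p.1 = q.1 ∨ p.1 = q.2 ∨ p.2 = q.1 ∨ p.2 = q.2 → p = q

/-- One step of the modified Hasse diagram: matched edges are reversed (point upwards),
all other Hasse edges point from a simplex to its codimension-1 faces. -/
def matchStep {V : Type*} (X : Set (Finset V)) (M : Set (Finset V × Finset V))
    (σ τ : Finset V) : Prop :=
  σ ∈ X ∧ τ ∈ X ∧
    ((σ, τ) ∈ M ∨ (τ ⊆ σ ∧ σ.card = τ.card + 1 ∧ (τ, σ) ∉ M))

/-- An acyclic matching: reversing matched edges leaves the Hasse diagram acyclic. -/
def IsAcyclicMatching {V : Type*} (X : Set (Finset V)) (M : Set (Finset V × Finset V)) : Prop :=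
  IsMatching X M ∧ ∀ σ, ¬ Relation.TransGen (matchStep X M) σ σ

/-- A critical (unmatched) simplex. -/
def IsCritical {V : Type*} (X : Set (Finset V)) (M : Set (Finset V × Finset V))
    (σ : Finset V) : Prop :=
  σ ∈ X ∧ ∀ p ∈ M, p.1 ≠ σ ∧ p.2 ≠ σ

/-- The number of `d`-dimensional critical simplices. -/
noncomputable def critCount {V : Type*} (X : Set (Finset V)) (M : Set (Finset V × Finset V))
    (d : ℕ) : ℕ :=
  {σ | IsCritical X M σ ∧ σ.card = d + 1}.ncard

/-- A complex is collapsible if it admits an acyclic matching with a unique critical simplex. -/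
def Collapsible {V : Type*} (X : Set (Finset V)) : Prop :=
  ∃ M, IsAcyclicMatching X M ∧ ∃! σ, IsCritical X M σ

/-- A maximal face of a complex. -/
def IsMaximalFace {V : Type*} (X : Set (Finset V)) (σ : Finset V) : Prop :=
  σ ∈ X ∧ ∀ τ ∈ X, σ ⊆ τ → σ = τ

/-- All critical simplices of the matching are maximal faces,
except possibly a single critical 0-simplex. -/
def ExceptOneMaximal {V : Type*} (X : Set (Finset V)) (M : Set (Finset V × Finset V)) : Prop :=
  (∀ σ, IsCritical X M σ → ¬ IsMaximalFace X σ → σ.card = 1) ∧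
  (∀ σ τ, IsCritical X M σ → IsCritical X M τ →
    ¬ IsMaximalFace X σ → ¬ IsMaximalFace X τ → σ = τ)

/-- The geometric realization of a complex, as a subspace of `V → ℝ`. -/
def realizationSet {V : Type*} (X : Set (Finset V)) : Set (V → ℝ) :=
  {f | (∀ v, 0 ≤ f v) ∧ ∃ s ∈ X, (∀ v, f v ≠ 0 ↔ v ∈ s) ∧ ∑ v ∈ s, f v = 1}

/-- The base point of the `d`-dimensional unit sphere. -/
noncomputable def spherePt (d : ℕ) : Metric.sphere (0 : EuclideanSpace ℝ (Fin (d+1))) 1 :=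
  ⟨EuclideanSpace.single 0 1, by simp⟩

/-- Identify all base points of the given spheres with a single external point. -/
noncomputable def WedgeRel (c : ℕ → ℕ) :
    (Unit ⊕ Σ d : ℕ, Fin (c d) × Metric.sphere (0 : EuclideanSpace ℝ (Fin (d+1))) 1) →
    (Unit ⊕ Σ d : ℕ, Fin (c d) × Metric.sphere (0 : EuclideanSpace ℝ (Fin (d+1))) 1) → Prop :=
  fun x y => ∃ d i, x = Sum.inr ⟨d, i, spherePt d⟩ ∧ y = Sum.inl ()

/-- The wedge of spheres with `c d` spheres of dimension `d` (a point if all `c d = 0`). -/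
noncomputable def WedgeOfSpheres (c : ℕ → ℕ) : Type :=
  Quot (WedgeRel c)

noncomputable instance (c : ℕ → ℕ) : TopologicalSpace (WedgeOfSpheres c) :=
  instTopologicalSpaceQuot

/-- A universal vertex: adjacent to every other vertex. -/
def IsUniversal {V : Type*} (G : SimpleGraph V) (u : V) : Prop :=
  ∀ w, w ≠ u → G.Adj u w

/-- A chordal graph: no induced cycle of length at least 4. -/
def Chordal {W : Type*} (H : SimpleGraph W) : Prop :=
  ¬ ∃ n, 4 ≤ n ∧ ∃ f : ZMod n → W, Function.Injective f ∧
    ∀ i j, H.Adj (f i) (f j) ↔ (j = i + 1 ∨ i = j + 1)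

/-- The domination number of a graph. -/
noncomputable def dominationNumber {V : Type*} (G : SimpleGraph V) : ℕ :=
  sInf {n | ∃ S : Finset V, S.card = n ∧ ∀ w, w ∉ S → ∃ x ∈ S, G.Adj x w}

/-- `G` belongs to the family `𝒢 m n`: the blocks are the fibres of `P`
(all nonempty, i.e. `P` surjective), and two distinct vertices are adjacent
iff their block indices are comparable in the product order. -/
def GridGraph {V : Type*} (m n : ℕ) (G : SimpleGraph V)
    (P : V → Fin (m+1) × Fin (n+1)) : Prop :=
  Function.Surjective P ∧ ∀ x y, G.Adj x y ↔ x ≠ y ∧ (P x ≤ P y ∨ P y ≤ P x)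

/-- The closed neighbourhood `N_G[v]`. -/
def closedNbhd {V : Type*} (G : SimpleGraph V) (v : V) : Set V :=
  insert v (G.neighborSet v)

/-- Independent sets of `G` (including `∅`) avoiding the vertex set `U`;
the full set of simplices (with the empty simplex) of `I(G − U)`. -/
def avoidIndepE {V : Type*} (G : SimpleGraph V) (U : Set V) : Set (Finset V) :=
  {s | (∀ x ∈ s, x ∉ U) ∧ ∀ x ∈ s, ∀ y ∈ s, ¬ G.Adj x y}

/-- The independence complex of `G`, including the empty simplex. -/
def indepComplexE {V : Type*} (G : SimpleGraph V) : Set (Finset V) :=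
  avoidIndepE G ∅
-- ### general relation lemmas

section Rel
open Relation
variable {α : Type*} {β : Type*}

lemma transGen_exists_step {r : α → α → Prop} {a b : α} (h : TransGen r a b) : ∃ c, r a c := by
  induction h using TransGen.head_induction_on with
  | single h => exact ⟨_, h⟩
  | head h _ _ => exact ⟨_, h⟩

lemma transGen_le [Preorder β] (f : α → β) {r : α → α → Prop}
    (hf : ∀ a b, r a b → f b ≤ f a) {a b : α} (h : TransGen r a b) : f b ≤ f a := by
  induction h with
  | single h => exact hf _ _ h
  | tail _ h ih => exact (hf _ _ h).trans ih

lemma transGen_lt (f : α → ℕ) {r : α → α → Prop}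
    (hf : ∀ a b, r a b → f a < f b) {a b : α} (h : TransGen r a b) : f a < f b := by
  induction h with
  | single h => exact hf _ _ h
  | tail _ h ih => exact ih.trans (hf _ _ h)

lemma cycle_restrict [PartialOrder β] (f : α → β) {r : α → α → Prop}
    (hf : ∀ a b, r a b → f b ≤ f a) {a : α} (h : TransGen r a a) :
    TransGen (fun x y => r x y ∧ f x = f a ∧ f y = f a) a a := by
  have key : ∀ b, TransGen r a b → f a ≤ f b →
      TransGen (fun x y => r x y ∧ f x = f a ∧ f y = f a) a b := by
    intro b hb
    induction hb with
    | single h1 => exact fun hle => TransGen.single ⟨h1, rfl, le_antisymm (hf _ _ h1) hle⟩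
    | @tail b c hab h1 ih =>
      intro hle
      have h2 : f b ≤ f a := transGen_le f hf hab
      have hba : f b = f a := le_antisymm h2 (hle.trans (hf _ _ h1))
      have hca : f c = f a := le_antisymm ((hf _ _ h1).trans h2) hle
      exact (ih hba.ge).tail ⟨h1, hba, hca⟩
  exact key a h le_rfl

lemma cycle_avoid {r : α → α → Prop} {c : α} (hc : ∀ y, ¬ r c y) {a : α}
    (h : TransGen r a a) : TransGen (fun x y => r x y ∧ x ≠ c ∧ y ≠ c) a a := by
  have hane : a ≠ c := by
    rintro rfl
    obtain ⟨y, hy⟩ := transGen_exists_step h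
    exact hc y hy
  have key : ∀ b, TransGen r a b → b ≠ c →
      TransGen (fun x y => r x y ∧ x ≠ c ∧ y ≠ c) a b := by
    intro b hb
    induction hb with
    | single h1 => exact fun hbc => TransGen.single ⟨h1, hane, hbc⟩
    | @tail b c' hab h1 ih =>
      intro hcc
      have hbc : b ≠ c := by rintro rfl; exact hc _ h1
      exact (ih hbc).tail ⟨h1, hbc, hcc⟩
  exact key a h hane

lemma myncard_biUnion {α β : Type*} [Finite β] (s : Finset α) (f : α → Set β)
    (hdisj : ∀ a ∈ s, ∀ b ∈ s, a ≠ b → Disjoint (f a) (f b)) :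
    (⋃ a ∈ s, f a).ncard = ∑ a ∈ s, (f a).ncard := by
  classical
  induction s using Finset.induction with
  | empty => simp
  | @insert a s hnotmem ih =>
    rw [Finset.set_biUnion_insert, Finset.sum_insert hnotmem,
      Set.ncard_union_eq ?_ (Set.toFinite _) (Set.toFinite _),
      ih (fun x hx y hy hxy => hdisj x (Finset.mem_insert_of_mem hx)
        y (Finset.mem_insert_of_mem hy) hxy)]
    · rw [Set.disjoint_iUnion_right]
      intro i
      rw [Set.disjoint_iUnion_right]
      intro hi
      exact hdisj a (Finset.mem_insert_self a s) i (Finset.mem_insert_of_mem hi)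
        (by rintro rfl; exact hnotmem hi)

end Rel

set_option linter.unusedSectionVars false

section Basics
variable {V : Type*} [Fintype V] [DecidableEq V] {G : SimpleGraph V}

lemma mem_indepComplex {σ : Finset V} :
    σ ∈ indepComplex G ↔ σ.Nonempty ∧ ∀ x ∈ σ, ∀ y ∈ σ, ¬ G.Adj x y := by
  simp [indepComplex, avoidIndep]

lemma mem_avoidIndepC {u : V} {σ : Finset V} :
    σ ∈ avoidIndep G (closedNbhd G u) ↔
      σ.Nonempty ∧ (∀ x ∈ σ, x ≠ u ∧ ¬ G.Adj u x) ∧ ∀ x ∈ σ, ∀ y ∈ σ, ¬ G.Adj x y := by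
  simp only [avoidIndep, closedNbhd, Set.mem_setOf_eq, Set.mem_insert_iff,
    SimpleGraph.mem_neighborSet, not_or]

lemma avoidIndep_mono {U : Set V} {s t : Finset V} (hs : s ∈ avoidIndep G U) (hts : t ⊆ s)
    (ht : t.Nonempty) : t ∈ avoidIndep G U :=
  ⟨ht, fun x hx => hs.2.1 x (hts hx), fun x hx y hy => hs.2.2 x (hts hx) y (hts hy)⟩

lemma erase_nonempty_of_mem_ne {σ : Finset V} {u : V} (hu : u ∈ σ) (hne : σ ≠ {u}) :
    (σ.erase u).Nonempty := by
  rcases Finset.eq_empty_or_nonempty (σ.erase u) with h | h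
  · exact absurd (by
      apply Finset.eq_singleton_iff_unique_mem.2
      refine ⟨hu, fun x hx => ?_⟩
      by_contra hxu
      exact (Finset.notMem_empty x) (h ▸ Finset.mem_erase.2 ⟨hxu, hx⟩)) hne
  · exact h

lemma exists_crit_singleton (G : SimpleGraph V) (U : Set V) (Mu : Set (Finset V × Finset V))
    (hMu : IsAcyclicMatching (avoidIndep G U) Mu)
    {w : V} (hw : ({w} : Finset V) ∈ avoidIndep G U) :
    ∃ x, IsCritical (avoidIndep G U) Mu {x} := by
  by_contra hno
  push_neg at hno
  set X := avoidIndep G U with hX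
  -- every singleton in X admits a TransGen-step to another singleton in X
  have key : ∀ x : V, ({x} : Finset V) ∈ X → ∃ y : V, ({y} : Finset V) ∈ X ∧
      Relation.TransGen (matchStep X Mu) {x} {y} := by
    intro x hx
    have h1 := hno x
    rw [IsCritical] at h1
    push_neg at h1
    obtain ⟨p, hp, hshare⟩ := h1 hx
    have hp1 : p.1 = {x} := by
      rcases Classical.em (p.1 = {x}) with h | h
      · exact h
      · exfalso
        have h2 := hshare h
        have hc := hMu.1.card_eq p hp
        rw [h2] at hc
        simp only [Finset.card_singleton] at hc
        have hemp : p.1 = ∅ := Finset.card_eq_zero.1 (by omega)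
        exact (hMu.1.left_mem p hp).1.ne_empty hemp
    have hc2 : p.2.card = 2 := by
      have := hMu.1.card_eq p hp; rw [hp1] at this; simpa using this
    have hx2 : x ∈ p.2 := by
      have := hMu.1.subset p hp
      rw [hp1] at this
      exact this (Finset.mem_singleton_self x)
    obtain ⟨y, hy⟩ : ∃ y, p.2.erase x = {y} := Finset.card_eq_one.1 (by
      rw [Finset.card_erase_of_mem hx2, hc2])
    have hyx : y ≠ x := by
      have : y ∈ p.2.erase x := hy ▸ Finset.mem_singleton_self y
      exact (Finset.mem_erase.1 this).1
    have hp2X : p.2 ∈ X := hMu.1.right_mem p hp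
    have hyX : ({y} : Finset V) ∈ X :=
      avoidIndep_mono hp2X (hy ▸ Finset.erase_subset x p.2) ⟨y, Finset.mem_singleton_self y⟩
    refine ⟨y, hyX, ?_⟩
    have step1 : matchStep X Mu {x} p.2 := ⟨hp1 ▸ hMu.1.left_mem p hp, hp2X, Or.inl (by
      rw [← hp1]; exact hp)⟩
    have step2 : matchStep X Mu p.2 {y} := by
      refine ⟨hp2X, hyX, Or.inr ⟨hy ▸ Finset.erase_subset x p.2, by simp [hc2], ?_⟩⟩
      intro hmem
      have := hMu.1.eq_of_shared _ hmem p hp (Or.inr (Or.inr (Or.inr rfl)))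
      have : ({y} : Finset V) = p.1 := congrArg Prod.fst this
      rw [hp1] at this
      exact hyx (Finset.singleton_injective this)
    exact (Relation.TransGen.single step1).tail step2
  -- iterate
  let S := {x : V // ({x} : Finset V) ∈ X}
  have hSne : Nonempty S := ⟨⟨w, hw⟩⟩
  let F : S → S := fun s => ⟨(key s.1 s.2).choose, (key s.1 s.2).choose_spec.1⟩
  have hF : ∀ s : S, Relation.TransGen (matchStep X Mu) {s.1} {(F s).1} :=
    fun s => (key s.1 s.2).choose_spec.2
  let g : ℕ → S := fun n => F^[n] ⟨w, hw⟩
  obtain ⟨m, n, hmn, heq⟩ := Finite.exists_ne_map_eq_of_infinite g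
  wlog hlt : m < n generalizing m n
  · exact this n m hmn.symm heq.symm (by omega)
  have chain : ∀ k : ℕ, Relation.TransGen (matchStep X Mu) {(g m).1} {(g (m + k + 1)).1} := by
    intro k
    induction k with
    | zero =>
      have : g (m + 1) = F (g m) := Function.iterate_succ_apply' F m _
      simpa [this] using hF (g m)
    | succ k ih =>
      have : g (m + k + 2) = F (g (m + k + 1)) := Function.iterate_succ_apply' F (m + k + 1) _
      have h2 := hF (g (m + k + 1))
      rw [← this] at h2
      exact ih.trans h2
  have hcyc := chain (n - m - 1)
  rw [show m + (n - m - 1) + 1 = n by omega, heq] at hcyc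
  exact hMu.2 _ hcyc

end Basics

section Main
variable {V : Type*} [Fintype V] [DecidableEq V] {G : SimpleGraph V} [DecidableRel G.Adj] {v : V}
  {M : V → Set (Finset V × Finset V)}

open Classical in
/-- a chosen critical vertex of the matching on `I(G - N[u])`. -/
noncomputable def auxA (G : SimpleGraph V) (M : V → Set (Finset V × Finset V)) (u : V) : V :=
  if h : ∃ x, IsCritical (avoidIndep G (closedNbhd G u)) (M u) {x} then h.choose else u

/-- The combined acyclic matching. -/
def bigW (G : SimpleGraph V) (v : V) (M : V → Set (Finset V × Finset V)) :
    Set (Finset V × Finset V) :=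
  {p | (∃ σ, v ∉ σ ∧ σ ∈ indepComplex G ∧ insert v σ ∈ indepComplex G ∧ p = (σ, insert v σ))
    ∨ (∃ u ∈ G.neighborSet v, ∃ q ∈ M u, p = (insert u q.1, insert u q.2))
    ∨ (∃ u ∈ G.neighborSet v, ¬ IsUniversal G u ∧
        p = (({u} : Finset V), ({u, auxA G M u} : Finset V)))}

variable (hclique : ∀ x ∈ closedNbhd G v, ∀ y ∈ closedNbhd G v, x ≠ y → G.Adj x y)

section SectorFacts
include hclique

lemma adj_nbrs {x y : V} (hx : G.Adj v x) (hy : G.Adj v y) (hxy : x ≠ y) : G.Adj x y :=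
  hclique x (Or.inr hx) y (Or.inr hy) hxy

/-- elements of `I(G - N[u])`-faces are non-neighbours of `v`. -/
lemma not_adj_v_of_memXu {u : V} (hu : G.Adj v u) {α : Finset V}
    (hα : α ∈ avoidIndep G (closedNbhd G u)) : ∀ x ∈ α, ¬ G.Adj v x := by
  intro x hx hvx
  obtain ⟨-, havoid, -⟩ := mem_avoidIndepC.1 hα
  obtain ⟨hxu, hux⟩ := havoid x hx
  exact hux (adj_nbrs hclique hu hvx (Ne.symm hxu))

omit hclique in
lemma u_not_mem_of_memXu {u : V} {α : Finset V}
    (hα : α ∈ avoidIndep G (closedNbhd G u)) : u ∉ α :=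
  fun h => ((mem_avoidIndepC.1 hα).2.1 u h).1 rfl

omit hclique in
lemma insert_mem_X_of_memXu {u : V} {α : Finset V}
    (hα : α ∈ avoidIndep G (closedNbhd G u)) : insert u α ∈ indepComplex G := by
  obtain ⟨hne, havoid, hindep⟩ := mem_avoidIndepC.1 hα
  refine mem_indepComplex.2 ⟨Finset.insert_nonempty u α, ?_⟩
  intro x hx y hy hadj
  rcases Finset.mem_insert.1 hx with hxu | hx'
  · rcases Finset.mem_insert.1 hy with hyu | hy'
    · exact G.irrefl (hxu ▸ hyu ▸ hadj)
    · exact (havoid y hy').2 (hxu ▸ hadj)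
  · rcases Finset.mem_insert.1 hy with hyu | hy'
    · exact (havoid x hx').2 (hyu ▸ hadj).symm
    · exact hindep x hx' y hy' hadj

/-- the unique `v`-neighbour of a face containing one. -/
lemma unique_nbr {σ : Finset V} (hσ : σ ∈ indepComplex G) {x y : V} (hx : x ∈ σ) (hy : y ∈ σ)
    (hvx : G.Adj v x) (hvy : G.Adj v y) : x = y := by
  by_contra hne
  exact (mem_indepComplex.1 hσ).2 x hx y hy (adj_nbrs hclique hvx hvy hne)

lemma erase_mem_Xu {σ : Finset V} (hσ : σ ∈ indepComplex G) {u : V} (hu : u ∈ σ)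
    (hne : σ ≠ {u}) : σ.erase u ∈ avoidIndep G (closedNbhd G u) := by
  obtain ⟨hσne, hindep⟩ := mem_indepComplex.1 hσ
  refine mem_avoidIndepC.2 ⟨erase_nonempty_of_mem_ne hu hne, ?_, ?_⟩
  · intro x hx
    obtain ⟨hxu, hxσ⟩ := Finset.mem_erase.1 hx
    exact ⟨hxu, hindep u hu x hxσ⟩
  · intro x hx y hy
    exact hindep x (Finset.mem_of_mem_erase hx) y (Finset.mem_of_mem_erase hy)

end SectorFacts

variable (hM : ∀ u ∈ G.neighborSet v, IsAcyclicMatching (avoidIndep G (closedNbhd G u)) (M u))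
include hM

/-- the defining property of `auxA` for non-universal neighbours. -/
lemma auxA_spec {u : V} (hu : G.Adj v u) (hnu : ¬ IsUniversal G u) :
    IsCritical (avoidIndep G (closedNbhd G u)) (M u) {auxA G M u} := by
  have hex : ∃ x, IsCritical (avoidIndep G (closedNbhd G u)) (M u) {x} := by
    rw [IsUniversal] at hnu
    push_neg at hnu
    obtain ⟨w, hwu, hnadj⟩ := hnu
    refine exists_crit_singleton G _ (M u) (hM u hu) (w := w) ?_
    exact mem_avoidIndepC.2 ⟨Finset.singleton_nonempty w, by simpa using ⟨hwu, hnadj⟩,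
      by simp⟩
  rw [auxA, dif_pos hex]
  exact hex.choose_spec

lemma auxA_mem_Xu {u : V} (hu : G.Adj v u) (hnu : ¬ IsUniversal G u) :
    ({auxA G M u} : Finset V) ∈ avoidIndep G (closedNbhd G u) :=
  (auxA_spec hM hu hnu).1

lemma auxA_ne {u : V} (hu : G.Adj v u) (hnu : ¬ IsUniversal G u) : auxA G M u ≠ u :=
  ((mem_avoidIndepC.1 (auxA_mem_Xu hM hu hnu)).2.1 _ (Finset.mem_singleton_self _)).1

lemma auxA_not_adj_u {u : V} (hu : G.Adj v u) (hnu : ¬ IsUniversal G u) :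
    ¬ G.Adj u (auxA G M u) :=
  ((mem_avoidIndepC.1 (auxA_mem_Xu hM hu hnu)).2.1 _ (Finset.mem_singleton_self _)).2

lemma auxA_not_adj_v (hclique : ∀ x ∈ closedNbhd G v, ∀ y ∈ closedNbhd G v, x ≠ y → G.Adj x y)
    {u : V} (hu : G.Adj v u) (hnu : ¬ IsUniversal G u) : ¬ G.Adj v (auxA G M u) :=
  not_adj_v_of_memXu hclique hu (auxA_mem_Xu hM hu hnu) _ (Finset.mem_singleton_self _)

lemma pair_mem_X {u : V} (hu : G.Adj v u) (hnu : ¬ IsUniversal G u) :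
    ({u, auxA G M u} : Finset V) ∈ indepComplex G := by
  have := insert_mem_X_of_memXu (α := {auxA G M u}) (u := u) (auxA_mem_Xu hM hu hnu)
  simpa using this

omit hM in
lemma special_mem_bigW {u : V} (hu : G.Adj v u) (hnu : ¬ IsUniversal G u) :
    (({u} : Finset V), ({u, auxA G M u} : Finset V)) ∈ bigW G v M :=
  Or.inr (Or.inr ⟨u, hu, hnu, rfl⟩)

omit hM in
lemma singleton_mem_X (u : V) : ({u} : Finset V) ∈ indepComplex G :=
  mem_indepComplex.2 ⟨Finset.singleton_nonempty u, by simp⟩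

omit hM in
lemma vpair_no_nbr {σ : Finset V} (hins : insert v σ ∈ indepComplex G) :
    ∀ x ∈ insert v σ, ¬ G.Adj v x := fun x hx =>
  (mem_indepComplex.1 hins).2 v (Finset.mem_insert_self v σ) x hx

omit hM in
lemma insert_cancel {u : V} {α β : Finset V} (ha : u ∉ α) (hb : u ∉ β)
    (h : insert u α = insert u β) : α = β := by
  rw [← Finset.erase_insert ha, ← Finset.erase_insert hb, h]

omit hM in
include hclique in
/-- non-`u` elements of lifted faces are non-neighbours of `v`. -/
lemma lift_sector {u : V} (hu : G.Adj v u) {α : Finset V}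
    (hα : α ∈ avoidIndep G (closedNbhd G u)) :
    ∀ x ∈ insert u α, G.Adj v x → x = u := by
  intro x hx hadj
  rcases Finset.mem_insert.1 hx with h | h
  · exact h
  · exact absurd hadj (not_adj_v_of_memXu hclique hu hα x h)

omit hM in
lemma card_lift {u : V} {α : Finset V} (hα : α ∈ avoidIndep G (closedNbhd G u)) :
    (insert u α).card = α.card + 1 ∧ 2 ≤ (insert u α).card := by
  have h1 : u ∉ α := u_not_mem_of_memXu hα
  have h2 : 1 ≤ α.card := Finset.card_pos.2 (mem_avoidIndepC.1 hα).1
  rw [Finset.card_insert_of_notMem h1]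
  omega

include hclique in
lemma bigW_isMatching : IsMatching (indepComplex G) (bigW G v M) := by
  have hXu : ∀ u, u ∈ G.neighborSet v → ∀ q ∈ M u,
      q.1 ∈ avoidIndep G (closedNbhd G u) ∧ q.2 ∈ avoidIndep G (closedNbhd G u) :=
    fun u hu q hq => ⟨(hM u hu).1.left_mem q hq, (hM u hu).1.right_mem q hq⟩
  constructor
  · rintro p (⟨σ, hv, hσ, hins, rfl⟩ | ⟨u, hu, q, hq, rfl⟩ | ⟨u, hu, hnu, rfl⟩)
    · exact hσ
    · exact insert_mem_X_of_memXu (hXu u hu q hq).1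
    · exact singleton_mem_X u
  · rintro p (⟨σ, hv, hσ, hins, rfl⟩ | ⟨u, hu, q, hq, rfl⟩ | ⟨u, hu, hnu, rfl⟩)
    · exact hins
    · exact insert_mem_X_of_memXu (hXu u hu q hq).2
    · exact pair_mem_X hM hu hnu
  · rintro p (⟨σ, hv, hσ, hins, rfl⟩ | ⟨u, hu, q, hq, rfl⟩ | ⟨u, hu, hnu, rfl⟩)
    · exact Finset.subset_insert v σ
    · exact Finset.insert_subset_insert u ((hM u hu).1.subset q hq)
    · exact Finset.singleton_subset_iff.2 (Finset.mem_insert_self u _)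
  · rintro p (⟨σ, hv, hσ, hins, rfl⟩ | ⟨u, hu, q, hq, rfl⟩ | ⟨u, hu, hnu, rfl⟩)
    · exact Finset.card_insert_of_notMem hv
    · have h1 := (card_lift (hXu u hu q hq).1).1
      have h2 := (card_lift (hXu u hu q hq).2).1
      have h3 := (hM u hu).1.card_eq q hq
      simp only [h1, h2, h3]
    · have hne : auxA G M u ≠ u := auxA_ne hM hu hnu
      rw [show ({u, auxA G M u} : Finset V) = insert u {auxA G M u} from rfl,
        Finset.card_insert_of_notMem (by simp [Ne.symm hne])]
      simp
  · -- eq_of_shared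
    have cross : ∀ {c c' : Finset V}, (∀ x ∈ c, ¬ G.Adj v x) → ∀ {w : V}, G.Adj v w →
        w ∈ c' → c = c' → False := by
      intro c c' hno w hw hw' he
      exact hno w (by rw [he]; exact hw') hw
    rintro p (⟨σ, hv, hσ, hins, rfl⟩ | ⟨u, hu, q, hq, rfl⟩ | ⟨u, hu, hnu, rfl⟩) <;>
      rintro p' (⟨σ', hv', hσ', hins', rfl⟩ | ⟨u', hu', q', hq', rfl⟩ | ⟨u', hu', hnu', rfl⟩) <;>
      intro hshare <;> dsimp only at hshare ⊢
    -- case v-v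
    · have hP := vpair_no_nbr (v := v) hins
      rcases hshare with h | h | h | h
      · rw [h]
      · exact absurd (by rw [h]; exact Finset.mem_insert_self v σ') hv
      · exact absurd (by rw [← h]; exact Finset.mem_insert_self v σ) hv'
      · rw [insert_cancel hv hv' h]
    -- case v-lift
    · exfalso
      have hP := vpair_no_nbr (v := v) hins
      have hPσ : ∀ x ∈ σ, ¬ G.Adj v x := fun x hx => hP x (Finset.mem_insert_of_mem hx)
      have ha' : G.Adj v u' := hu'
      rcases hshare with h | h | h | h
      · exact cross hPσ ha' (Finset.mem_insert_self u' q'.1) h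
      · exact cross hPσ ha' (Finset.mem_insert_self u' q'.2) h
      · exact cross hP ha' (Finset.mem_insert_self u' q'.1) h
      · exact cross hP ha' (Finset.mem_insert_self u' q'.2) h
    -- case v-special
    · exfalso
      have hP := vpair_no_nbr (v := v) hins
      have hPσ : ∀ x ∈ σ, ¬ G.Adj v x := fun x hx => hP x (Finset.mem_insert_of_mem hx)
      have ha' : G.Adj v u' := hu'
      rcases hshare with h | h | h | h
      · exact cross hPσ ha' (Finset.mem_singleton_self u') h
      · exact cross hPσ ha' (Finset.mem_insert_self u' _) h
      · exact cross hP ha' (Finset.mem_singleton_self u') h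
      · exact cross hP ha' (Finset.mem_insert_self u' _) h
    -- case lift-v
    · exfalso
      have hP := vpair_no_nbr (v := v) hins'
      have hPσ : ∀ x ∈ σ', ¬ G.Adj v x := fun x hx => hP x (Finset.mem_insert_of_mem hx)
      have ha : G.Adj v u := hu
      rcases hshare with h | h | h | h
      · exact cross hPσ ha (Finset.mem_insert_self u q.1) h.symm
      · exact cross hP ha (Finset.mem_insert_self u q.1) h.symm
      · exact cross hPσ ha (Finset.mem_insert_self u q.2) h.symm
      · exact cross hP ha (Finset.mem_insert_self u q.2) h.symm
    -- case lift-lift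
    · have ha : G.Adj v u := hu
      have ha' : G.Adj v u' := hu'
      have hq1 := (hXu u hu q hq).1
      have hq2 := (hXu u hu q hq).2
      have hq1' := (hXu u' hu' q' hq').1
      have hq2' := (hXu u' hu' q' hq').2
      have huu : u = u' := by
        refine (?_ : u' = u).symm
        rcases hshare with h | h | h | h
        · exact lift_sector hclique ha hq1 u' (by rw [h]; exact Finset.mem_insert_self u' q'.1) ha'
        · exact lift_sector hclique ha hq1 u' (by rw [h]; exact Finset.mem_insert_self u' q'.2) ha'
        · exact lift_sector hclique ha hq2 u' (by rw [h]; exact Finset.mem_insert_self u' q'.1) ha'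
        · exact lift_sector hclique ha hq2 u' (by rw [h]; exact Finset.mem_insert_self u' q'.2) ha'
      subst huu
      have hqq : q = q' := by
        apply (hM u hu).1.eq_of_shared q hq q' hq'
        rcases hshare with h | h | h | h
        · exact Or.inl (insert_cancel (u_not_mem_of_memXu hq1) (u_not_mem_of_memXu hq1') h)
        · exact Or.inr (Or.inl (insert_cancel (u_not_mem_of_memXu hq1) (u_not_mem_of_memXu hq2') h))
        · exact Or.inr (Or.inr (Or.inl (insert_cancel (u_not_mem_of_memXu hq2) (u_not_mem_of_memXu hq1') h)))
        · exact Or.inr (Or.inr (Or.inr (insert_cancel (u_not_mem_of_memXu hq2) (u_not_mem_of_memXu hq2') h)))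
      rw [hqq]
    -- case lift-special
    · exfalso
      have ha : G.Adj v u := hu
      have ha' : G.Adj v u' := hu'
      have hq1 := (hXu u hu q hq).1
      have hq2 := (hXu u hu q hq).2
      have huu : u = u' := by
        refine (?_ : u' = u).symm
        rcases hshare with h | h | h | h
        · exact lift_sector hclique ha hq1 u' (by rw [h]; exact Finset.mem_singleton_self u') ha'
        · exact lift_sector hclique ha hq1 u' (by rw [h]; exact Finset.mem_insert_self u' _) ha'
        · exact lift_sector hclique ha hq2 u' (by rw [h]; exact Finset.mem_singleton_self u') ha'
        · exact lift_sector hclique ha hq2 u' (by rw [h]; exact Finset.mem_insert_self u' _) ha'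
      subst huu
      have hcrit := auxA_spec hM ha hnu'
      have hau : u ∉ ({auxA G M u} : Finset V) := by
        simp [Ne.symm (auxA_ne hM ha hnu')]
      have hsing : ∀ {γ : Finset V}, γ ∈ avoidIndep G (closedNbhd G u) →
          insert u γ ≠ {u} := by
        intro γ hγ h
        obtain ⟨x, hx⟩ := (mem_avoidIndepC.1 hγ).1
        have : x ∈ ({u} : Finset V) := by rw [← h]; exact Finset.mem_insert_of_mem hx
        exact (u_not_mem_of_memXu hγ) (by rwa [Finset.mem_singleton.1 this] at hx)
      rcases hshare with h | h | h | h
      · exact hsing hq1 h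
      · exact (hcrit.2 q hq).1 (insert_cancel (u_not_mem_of_memXu hq1) hau h)
      · exact hsing hq2 h
      · exact (hcrit.2 q hq).2 (insert_cancel (u_not_mem_of_memXu hq2) hau h)
    -- case special-v
    · exfalso
      have hP := vpair_no_nbr (v := v) hins'
      have hPσ : ∀ x ∈ σ', ¬ G.Adj v x := fun x hx => hP x (Finset.mem_insert_of_mem hx)
      have ha : G.Adj v u := hu
      rcases hshare with h | h | h | h
      · exact cross hPσ ha (Finset.mem_singleton_self u) h.symm
      · exact cross hP ha (Finset.mem_singleton_self u) h.symm
      · exact cross hPσ ha (Finset.mem_insert_self u _) h.symm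
      · exact cross hP ha (Finset.mem_insert_self u _) h.symm
    -- case special-lift
    · exfalso
      have ha : G.Adj v u := hu
      have ha' : G.Adj v u' := hu'
      have hq1' := (hXu u' hu' q' hq').1
      have hq2' := (hXu u' hu' q' hq').2
      have huu : u = u' := by
        rcases hshare with h | h | h | h
        · exact lift_sector hclique ha' hq1' u (by rw [← h]; exact Finset.mem_singleton_self u) ha
        · exact lift_sector hclique ha' hq2' u (by rw [← h]; exact Finset.mem_singleton_self u) ha
        · exact lift_sector hclique ha' hq1' u (by rw [← h]; exact Finset.mem_insert_self u _) ha
        · exact lift_sector hclique ha' hq2' u (by rw [← h]; exact Finset.mem_insert_self u _) ha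
      subst huu
      have hcrit := auxA_spec hM ha hnu
      have hau : u ∉ ({auxA G M u} : Finset V) := by
        simp [Ne.symm (auxA_ne hM ha hnu)]
      have hsing : ∀ {γ : Finset V}, γ ∈ avoidIndep G (closedNbhd G u) →
          insert u γ ≠ {u} := by
        intro γ hγ h
        obtain ⟨x, hx⟩ := (mem_avoidIndepC.1 hγ).1
        have : x ∈ ({u} : Finset V) := by rw [← h]; exact Finset.mem_insert_of_mem hx
        exact (u_not_mem_of_memXu hγ) (by rwa [Finset.mem_singleton.1 this] at hx)
      rcases hshare with h | h | h | h
      · exact hsing hq1' h.symm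
      · exact hsing hq2' h.symm
      · exact (hcrit.2 q' hq').1 (insert_cancel (u_not_mem_of_memXu hq1') hau h.symm)
      · exact (hcrit.2 q' hq').2 (insert_cancel (u_not_mem_of_memXu hq2') hau h.symm)
    -- case special-special
    · have ha : G.Adj v u := hu
      have ha' : G.Adj v u' := hu'
      have hnadj : ¬ G.Adj v (auxA G M u) := auxA_not_adj_v hM hclique ha hnu
      have hcard : ({u, auxA G M u} : Finset V).card = 2 := by
        rw [show ({u, auxA G M u} : Finset V) = insert u {auxA G M u} from rfl,
          Finset.card_insert_of_notMem (by simp [Ne.symm (auxA_ne hM ha hnu)])]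
        simp
      have huu : u = u' := by
        rcases hshare with h | h | h | h
        · exact Finset.singleton_injective h
        · have h2 : u' ∈ ({u} : Finset V) := by rw [h]; exact Finset.mem_insert_self u' _
          exact (Finset.mem_singleton.1 h2).symm
        · have h2 : u' ∈ ({u, auxA G M u} : Finset V) := by
            rw [h]; exact Finset.mem_singleton_self u'
          rcases Finset.mem_insert.1 h2 with h' | h'
          · exact h'.symm
          · exact absurd ha' (by rw [Finset.mem_singleton.1 h']; exact hnadj)
        · have h2 : u' ∈ ({u, auxA G M u} : Finset V) := by
            rw [h]; exact Finset.mem_insert_self u' _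
          rcases Finset.mem_insert.1 h2 with h' | h'
          · exact h'.symm
          · exact absurd ha' (by rw [Finset.mem_singleton.1 h']; exact hnadj)
      subst huu
      rcases hshare with h | h | h | h
      · rfl
      · exfalso; rw [← h] at hcard; simp at hcard
      · exfalso; rw [h] at hcard; simp at hcard
      · rfl

omit hclique hM in
lemma down_eq {a b : Finset V} (hsub : b ⊆ a) (hcard : a.card = b.card + 1) :
    ∃ x ∈ a, x ∉ b ∧ b = a.erase x := by
  have h1 : (a \ b).card = 1 := by rw [Finset.card_sdiff_of_subset hsub]; omega
  obtain ⟨x, hx⟩ := Finset.card_eq_one.1 h1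
  have hxa : x ∈ a ∧ x ∉ b := by
    have h2 : x ∈ a \ b := hx ▸ Finset.mem_singleton_self x
    exact ⟨(Finset.mem_sdiff.1 h2).1, (Finset.mem_sdiff.1 h2).2⟩
  refine ⟨x, hxa.1, hxa.2, ?_⟩
  ext y
  simp only [Finset.mem_erase]
  constructor
  · exact fun hy => ⟨fun he => hxa.2 (he ▸ hy), hsub hy⟩
  · rintro ⟨hne, hya⟩
    by_contra hyb
    have h3 : y ∈ a \ b := Finset.mem_sdiff.2 ⟨hya, hyb⟩
    rw [hx] at h3
    exact hne (Finset.mem_singleton.1 h3)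

include hclique in
lemma bigW_step_mono : ∀ a b, matchStep (indepComplex G) (bigW G v M) a b →
    b ∩ G.neighborFinset v ≤ a ∩ G.neighborFinset v := by
  have hXu : ∀ u, u ∈ G.neighborSet v → ∀ q ∈ M u,
      q.1 ∈ avoidIndep G (closedNbhd G u) ∧ q.2 ∈ avoidIndep G (closedNbhd G u) :=
    fun u hu q hq => ⟨(hM u hu).1.left_mem q hq, (hM u hu).1.right_mem q hq⟩
  rintro a b ⟨haX, hbX, hstep | ⟨hsub, hcard, hnW⟩⟩
  · rcases hstep with ⟨σ', hv', hσ', hins', he⟩ | ⟨u, hu, q, hq, he⟩ | ⟨u, hu, hnu, he⟩ <;>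
      injection he with he1 he2 <;> subst he1 <;> subst he2
    · intro x hx
      obtain ⟨hx1, hx2⟩ := Finset.mem_inter.1 hx
      exact absurd ((SimpleGraph.mem_neighborFinset _ _ _).1 hx2) (vpair_no_nbr hins' x hx1)
    · intro x hx
      obtain ⟨hx1, hx2⟩ := Finset.mem_inter.1 hx
      have := lift_sector hclique hu (hXu u hu q hq).2 x hx1 ((SimpleGraph.mem_neighborFinset _ _ _).1 hx2)
      subst this
      exact Finset.mem_inter.2 ⟨Finset.mem_insert_self x q.1, hx2⟩
    · intro x hx
      obtain ⟨hx1, hx2⟩ := Finset.mem_inter.1 hx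
      have := lift_sector hclique hu (auxA_mem_Xu hM hu hnu) x hx1
        ((SimpleGraph.mem_neighborFinset _ _ _).1 hx2)
      subst this
      exact Finset.mem_inter.2 ⟨Finset.mem_singleton_self x, hx2⟩
  · exact Finset.inter_subset_inter hsub (Finset.Subset.refl _)

include hclique in
lemma bigW_acyclic :
    ∀ σ, ¬ Relation.TransGen (matchStep (indepComplex G) (bigW G v M)) σ σ := by
  have hXu : ∀ u, u ∈ G.neighborSet v → ∀ q ∈ M u,
      q.1 ∈ avoidIndep G (closedNbhd G u) ∧ q.2 ∈ avoidIndep G (closedNbhd G u) :=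
    fun u hu q hq => ⟨(hM u hu).1.left_mem q hq, (hM u hu).1.right_mem q hq⟩
  intro σ hcyc
  obtain ⟨τ0, hstep0⟩ := transGen_exists_step hcyc
  have hσX : σ ∈ indepComplex G := hstep0.1
  have hc1 := cycle_restrict (fun ρ => ρ ∩ G.neighborFinset v)
    (bigW_step_mono hclique hM) hcyc
  by_cases hS : σ ∩ G.neighborFinset v = ∅
  · -- sector ∗ : no neighbours of v
    beta_reduce at hc1
    rw [hS] at hc1
    have hm : ∀ a b, (fun x y => matchStep (indepComplex G) (bigW G v M) x y ∧
        x ∩ G.neighborFinset v = ∅ ∧ y ∩ G.neighborFinset v = ∅) a b →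
        (b.erase v).card ≤ (a.erase v).card := by
      rintro a b ⟨⟨haX, hbX, hstep | ⟨hsub, hcard, hnW⟩⟩, hea, heb⟩
      · rcases hstep with ⟨σ', hv', hσ', hins', he⟩ | ⟨u, hu, q, hq, he⟩ | ⟨u, hu, hnu, he⟩ <;>
          injection he with he1 he2 <;> subst he1 <;> subst he2
        · rw [Finset.erase_insert hv', Finset.erase_eq_of_notMem hv']
        · exfalso
          have h2 : u ∈ (insert u q.1) ∩ G.neighborFinset v :=
            Finset.mem_inter.2 ⟨Finset.mem_insert_self u q.1,
              (SimpleGraph.mem_neighborFinset _ _ _).2 hu⟩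
          rw [hea] at h2
          exact Finset.notMem_empty u h2
        · exfalso
          have h2 : u ∈ ({u} : Finset V) ∩ G.neighborFinset v :=
            Finset.mem_inter.2 ⟨Finset.mem_singleton_self u,
              (SimpleGraph.mem_neighborFinset _ _ _).2 hu⟩
          rw [hea] at h2
          exact Finset.notMem_empty u h2
      · obtain ⟨x, hxa, hxb, hb⟩ := down_eq hsub hcard
        by_cases hxv : x = v
        · exfalso
          subst hxv
          refine hnW (Or.inl ⟨b, ?_, hbX, ?_, ?_⟩)
          · rw [hb]; exact Finset.notMem_erase x a
          · rw [hb, Finset.insert_erase hxa]; exact haX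
          · rw [hb, Finset.insert_erase hxa]
        · rw [hb, Finset.erase_right_comm]
          exact Finset.card_le_card (Finset.erase_subset x (a.erase v))
    have hc2 := cycle_restrict (fun ρ => (ρ.erase v).card) hm hc1
    have hlt : ∀ a b, (fun x y => (matchStep (indepComplex G) (bigW G v M) x y ∧
        x ∩ G.neighborFinset v = ∅ ∧ y ∩ G.neighborFinset v = ∅) ∧
          (x.erase v).card = (σ.erase v).card ∧ (y.erase v).card = (σ.erase v).card) a b →
        a.card < b.card := by
      rintro a b ⟨⟨⟨haX, hbX, hstep | ⟨hsub, hcard, hnW⟩⟩, hea, heb⟩, hma, hmb⟩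
      · rcases hstep with ⟨σ', hv', hσ', hins', he⟩ | ⟨u, hu, q, hq, he⟩ | ⟨u, hu, hnu, he⟩ <;>
          injection he with he1 he2 <;> subst he1 <;> subst he2
        · rw [Finset.card_insert_of_notMem hv']; omega
        · exfalso
          have h2 : u ∈ (insert u q.1) ∩ G.neighborFinset v :=
            Finset.mem_inter.2 ⟨Finset.mem_insert_self u q.1,
              (SimpleGraph.mem_neighborFinset _ _ _).2 hu⟩
          rw [hea] at h2
          exact Finset.notMem_empty u h2
        · exfalso
          have h2 : u ∈ ({u} : Finset V) ∩ G.neighborFinset v :=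
            Finset.mem_inter.2 ⟨Finset.mem_singleton_self u,
              (SimpleGraph.mem_neighborFinset _ _ _).2 hu⟩
          rw [hea] at h2
          exact Finset.notMem_empty u h2
      · exfalso
        obtain ⟨x, hxa, hxb, hb⟩ := down_eq hsub hcard
        by_cases hxv : x = v
        · subst hxv
          refine hnW (Or.inl ⟨b, ?_, hbX, ?_, ?_⟩)
          · rw [hb]; exact Finset.notMem_erase x a
          · rw [hb, Finset.insert_erase hxa]; exact haX
          · rw [hb, Finset.insert_erase hxa]
        · have h3 : (b.erase v).card < (a.erase v).card := by
            rw [hb, Finset.erase_right_comm]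
            exact Finset.card_erase_lt_of_mem (Finset.mem_erase.2 ⟨hxv, hxa⟩)
          omega
    exact absurd (transGen_lt Finset.card hlt hc2) (lt_irrefl _)
  · -- sector u
    obtain ⟨u, hu⟩ := Finset.nonempty_iff_ne_empty.2 hS
    obtain ⟨huσ, hunb⟩ := Finset.mem_inter.1 hu
    have huadj : G.Adj v u := (SimpleGraph.mem_neighborFinset _ _ _).1 hunb
    have hneigh : u ∈ G.neighborSet v := huadj
    have hSu : σ ∩ G.neighborFinset v = {u} := by
      ext x
      simp only [Finset.mem_inter, Finset.mem_singleton, SimpleGraph.mem_neighborFinset]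
      constructor
      · rintro ⟨hx1, hx2⟩
        exact unique_nbr hclique hσX hx1 huσ hx2 huadj
      · rintro rfl
        exact ⟨huσ, huadj⟩
    beta_reduce at hc1
    rw [hSu] at hc1
    -- common facts
    have hmem_of : ∀ {ρ : Finset V}, ρ ∩ G.neighborFinset v = {u} → u ∈ ρ := by
      intro ρ hρ
      have : u ∈ ρ ∩ G.neighborFinset v := by rw [hρ]; exact Finset.mem_singleton_self u
      exact (Finset.mem_inter.1 this).1
    have huniq : ∀ {ρ : Finset V}, ρ ∩ G.neighborFinset v = {u} →
        ∀ x ∈ ρ, G.Adj v x → x = u := by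
      intro ρ hρ x hx hadj
      have : x ∈ ρ ∩ G.neighborFinset v :=
        Finset.mem_inter.2 ⟨hx, (SimpleGraph.mem_neighborFinset _ _ _).2 hadj⟩
      rw [hρ] at this
      exact Finset.mem_singleton.1 this
    by_cases hUu : IsUniversal G u
    · -- universal neighbour: {u} has no outgoing step
      have NoOut : ∀ y, ¬ (matchStep (indepComplex G) (bigW G v M) {u} y ∧
          ({u} : Finset V) ∩ G.neighborFinset v = {u} ∧ y ∩ G.neighborFinset v = {u}) := by
        rintro y ⟨⟨haX, hyX, hstep | ⟨hsub, hcard, hnW⟩⟩, hea, heb⟩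
        · rcases hstep with ⟨σ', hv', hσ', hins', he⟩ | ⟨u'', hu'', q, hq, he⟩ |
            ⟨u'', hu'', hnu'', he⟩ <;> injection he with he1 he2
          · refine (mem_indepComplex.1 hins').2 v (Finset.mem_insert_self v σ') u ?_ huadj
            rw [← he1]
            exact Finset.mem_insert_of_mem (Finset.mem_singleton_self u)
          · have h2 := (card_lift (hXu u'' hu'' q hq).1).2
            rw [← he1] at h2
            simp at h2
          · have h3 : u = u'' := Finset.singleton_injective he1
            exact hnu'' (h3 ▸ hUu)
        · obtain ⟨x, hxa, hxb, hb⟩ := down_eq hsub hcard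
          have hxu : x = u := Finset.mem_singleton.1 hxa
          subst hxu
          rw [Finset.erase_singleton] at hb
          exact (mem_indepComplex.1 hyX).1.ne_empty hb
      have hc2 := cycle_avoid NoOut hc1
      obtain ⟨y, hy⟩ := transGen_exists_step hc2
      have hσu : σ ≠ {u} := hy.2.1
      have hXuσ := erase_mem_Xu hclique hσX huσ hσu
      obtain ⟨z, hz⟩ := (mem_avoidIndepC.1 hXuσ).1
      obtain ⟨hz1, hz2⟩ := (mem_avoidIndepC.1 hXuσ).2.1 z hz
      exact hz2 (hUu z hz1)
    · -- non-universal neighbour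
      have hcrit := auxA_spec hM huadj hUu
      have hane : auxA G M u ≠ u := auxA_ne hM huadj hUu
      have hnadjv : ¬ G.Adj v (auxA G M u) := auxA_not_adj_v hM hclique huadj hUu
      have hcardp : ({u, auxA G M u} : Finset V).card = 2 := by
        rw [show ({u, auxA G M u} : Finset V) = insert u {auxA G M u} from rfl,
          Finset.card_insert_of_notMem (by simp [Ne.symm hane])]
        simp
      have herase_au : ({u, auxA G M u} : Finset V).erase (auxA G M u) = {u} := by
        ext z
        simp only [Finset.mem_erase, Finset.mem_insert, Finset.mem_singleton]
        constructor
        · rintro ⟨h1, h2 | h2⟩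
          · exact h2
          · exact absurd h2 h1
        · rintro rfl
          exact ⟨Ne.symm hane, Or.inl rfl⟩
      have NoOut2 : ∀ y, ¬ (matchStep (indepComplex G) (bigW G v M) {u, auxA G M u} y ∧
          ({u, auxA G M u} : Finset V) ∩ G.neighborFinset v = {u} ∧
            y ∩ G.neighborFinset v = {u}) := by
        rintro y ⟨⟨haX, hyX, hstep | ⟨hsub, hcard, hnW⟩⟩, hea, heb⟩
        · rcases hstep with ⟨σ', hv', hσ', hins', he⟩ | ⟨u'', hu'', q, hq, he⟩ |
            ⟨u'', hu'', hnu'', he⟩ <;> injection he with he1 he2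
          · refine (mem_indepComplex.1 hins').2 v (Finset.mem_insert_self v σ') u ?_ huadj
            rw [← he1]
            exact Finset.mem_insert_of_mem (Finset.mem_insert_self u _)
          · -- {u,au} = insert u'' q.1 : u'' = u and q.1 = {au}, contradicting criticality
            have hu2 : u'' = u := by
              have h4 : u'' ∈ ({u, auxA G M u} : Finset V) := by
                rw [he1]; exact Finset.mem_insert_self u'' q.1
              rcases Finset.mem_insert.1 h4 with h5 | h5
              · exact h5
              · have h6 := Finset.mem_singleton.1 h5
                rw [h6] at hu''
                exact absurd (hu'' : G.Adj v (auxA G M u)) hnadjv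
            rw [hu2] at he1 hq
            have hq1 : q.1 = {auxA G M u} := by
              refine (insert_cancel ?_ (u_not_mem_of_memXu (hXu u hneigh q hq).1) he1).symm
              simp [Ne.symm hane]
            exact (hcrit.2 q hq).1 hq1
          · rw [he1] at hcardp
            simp at hcardp
        · obtain ⟨x, hxa, hxb, hb⟩ := down_eq hsub hcard
          rcases Finset.mem_insert.1 hxa with h5 | h5
          · -- removing u : y = {au}, contradicting y ∩ N = {u}
            subst h5
            rw [Finset.erase_insert (by simp [Ne.symm hane])] at hb
            have h6 : x ∈ y ∩ G.neighborFinset v := by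
              rw [heb]; exact Finset.mem_singleton_self x
            rw [hb] at h6
            exact hane ((Finset.mem_singleton.1 (Finset.mem_inter.1 h6).1).symm) |>.elim
          · -- removing au : the reversed matched edge
            have hxau : x = auxA G M u := Finset.mem_singleton.1 h5
            subst hxau
            rw [herase_au] at hb
            rw [hb] at hnW
            exact hnW (special_mem_bigW huadj hUu)
      have hc2 := cycle_avoid NoOut2 hc1
      have NoOut1 : ∀ y, ¬ ((matchStep (indepComplex G) (bigW G v M) {u} y ∧
          ({u} : Finset V) ∩ G.neighborFinset v = {u} ∧ y ∩ G.neighborFinset v = {u}) ∧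
            ({u} : Finset V) ≠ {u, auxA G M u} ∧ y ≠ {u, auxA G M u}) := by
        rintro y ⟨⟨⟨haX, hyX, hstep | ⟨hsub, hcard, hnW⟩⟩, hea, heb⟩, hc2a, hc2b⟩
        · rcases hstep with ⟨σ', hv', hσ', hins', he⟩ | ⟨u'', hu'', q, hq, he⟩ |
            ⟨u'', hu'', hnu'', he⟩ <;> injection he with he1 he2
          · refine (mem_indepComplex.1 hins').2 v (Finset.mem_insert_self v σ') u ?_ huadj
            rw [← he1]
            exact Finset.mem_insert_of_mem (Finset.mem_singleton_self u)
          · have h2 := (card_lift (hXu u'' hu'' q hq).1).2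
            rw [← he1] at h2
            simp at h2
          · have h3 : u = u'' := Finset.singleton_injective he1
            subst h3
            exact hc2b he2
        · obtain ⟨x, hxa, hxb, hb⟩ := down_eq hsub hcard
          have hxu : x = u := Finset.mem_singleton.1 hxa
          subst hxu
          rw [Finset.erase_singleton] at hb
          exact (mem_indepComplex.1 hyX).1.ne_empty hb
      have hc3 := cycle_avoid NoOut1 hc2
      -- map the cycle down to the sector complex
      have hmap : ∀ a b, (((matchStep (indepComplex G) (bigW G v M) a b ∧
            a ∩ G.neighborFinset v = {u} ∧ b ∩ G.neighborFinset v = {u}) ∧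
            a ≠ {u, auxA G M u} ∧ b ≠ {u, auxA G M u}) ∧ a ≠ {u} ∧ b ≠ {u}) →
          matchStep (avoidIndep G (closedNbhd G u)) (M u) (a.erase u) (b.erase u) := by
        rintro a b ⟨⟨⟨⟨haX, hbX, hstep | ⟨hsub, hcard, hnW⟩⟩, hea, heb⟩, hac2, hbc2⟩, hac1, hbc1⟩
        · rcases hstep with ⟨σ', hv', hσ', hins', he⟩ | ⟨u'', hu'', q, hq, he⟩ |
            ⟨u'', hu'', hnu'', he⟩ <;> injection he with he1 he2
          · exfalso
            have hua : u ∈ a := hmem_of hea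
            rw [he1] at hua
            exact (mem_indepComplex.1 hins').2 v (Finset.mem_insert_self v σ') u
              (Finset.mem_insert_of_mem hua) huadj
          · have hu2 : u'' = u := by
              refine huniq hea u'' ?_ (hu'' : G.Adj v u'')
              rw [he1]; exact Finset.mem_insert_self u'' q.1
            rw [hu2] at he1 he2 hq
            have e1 : a.erase u = q.1 := by
              rw [he1]; exact Finset.erase_insert (u_not_mem_of_memXu (hXu u hneigh q hq).1)
            have e2 : b.erase u = q.2 := by
              rw [he2]; exact Finset.erase_insert (u_not_mem_of_memXu (hXu u hneigh q hq).2)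
            rw [e1, e2]
            exact ⟨(hXu u hneigh q hq).1, (hXu u hneigh q hq).2, Or.inl hq⟩
          · exfalso
            have hu2 : u'' = u := by
              refine huniq hea u'' ?_ (hu'' : G.Adj v u'')
              rw [he1]; exact Finset.mem_singleton_self u''
            rw [hu2] at he1
            exact hac1 he1
        · have hua : u ∈ a := hmem_of hea
          have hub : u ∈ b := hmem_of heb
          have haXu : a.erase u ∈ avoidIndep G (closedNbhd G u) :=
            erase_mem_Xu hclique haX hua hac1
          have hbXu : b.erase u ∈ avoidIndep G (closedNbhd G u) :=
            erase_mem_Xu hclique hbX hub hbc1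
          refine ⟨haXu, hbXu, Or.inr ⟨Finset.erase_subset_erase u hsub, ?_, ?_⟩⟩
          · rw [Finset.card_erase_of_mem hua, Finset.card_erase_of_mem hub]
            have h1 : 1 ≤ b.card := Finset.card_pos.2 ⟨u, hub⟩
            omega
          · intro hmem
            refine hnW ?_
            have h5 : (insert u (b.erase u), insert u (a.erase u)) ∈ bigW G v M :=
              Or.inr (Or.inl ⟨u, hneigh, (b.erase u, a.erase u), hmem, rfl⟩)
            rwa [Finset.insert_erase hub, Finset.insert_erase hua] at h5
      exact (hM u hneigh).2 _ (Relation.TransGen.lift (fun ρ : Finset V => ρ.erase u) hmap _ _ hc3)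

omit hclique hM in
lemma v_not_universal (h2 : closedNbhd G v ⊂ Set.univ) : ¬ IsUniversal G v := by
  obtain ⟨w, hw⟩ := Set.ne_univ_iff_exists_notMem _ |>.1 h2.ne
  rw [closedNbhd, Set.mem_insert_iff] at hw
  push_neg at hw
  intro huniv
  exact hw.2 (huniv w hw.1)

omit hclique hM in
lemma universal_adj (h2 : closedNbhd G v ⊂ Set.univ) {u : V} (hu : IsUniversal G u) :
    G.Adj v u := by
  have hne : u ≠ v := by rintro rfl; exact v_not_universal h2 hu
  exact (hu v (Ne.symm hne)).symm

omit hclique hM in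
lemma crit_v : IsCritical (indepComplex G) (bigW G v M) {v} := by
  refine ⟨singleton_mem_X v, ?_⟩
  rintro p (⟨σ', hv', hσ', hins', rfl⟩ | ⟨u, hu, q, hq, rfl⟩ | ⟨u, hu, hnu, rfl⟩) <;>
    dsimp only <;> constructor
  · rintro rfl; exact hv' (Finset.mem_singleton_self v)
  · intro h
    obtain ⟨x, hx⟩ := (mem_indepComplex.1 hσ').1
    have : x ∈ ({v} : Finset V) := by rw [← h]; exact Finset.mem_insert_of_mem hx
    exact hv' ((Finset.mem_singleton.1 this) ▸ hx)
  · intro h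
    have : u ∈ ({v} : Finset V) := by rw [← h]; exact Finset.mem_insert_self u q.1
    exact G.irrefl ((Finset.mem_singleton.1 this) ▸ (hu : G.Adj v u))
  · intro h
    have : u ∈ ({v} : Finset V) := by rw [← h]; exact Finset.mem_insert_self u q.2
    exact G.irrefl ((Finset.mem_singleton.1 this) ▸ (hu : G.Adj v u))
  · intro h
    exact G.irrefl ((Finset.singleton_injective h) ▸ (hu : G.Adj v u))
  · intro h
    have : u ∈ ({v} : Finset V) := by rw [← h]; exact Finset.mem_insert_self u _
    exact G.irrefl ((Finset.mem_singleton.1 this) ▸ (hu : G.Adj v u))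

lemma crit_univ {u : V} (hadj : G.Adj v u) (hUu : IsUniversal G u) :
    IsCritical (indepComplex G) (bigW G v M) {u} := by
  have hXu : ∀ w, w ∈ G.neighborSet v → ∀ q ∈ M w,
      q.1 ∈ avoidIndep G (closedNbhd G w) ∧ q.2 ∈ avoidIndep G (closedNbhd G w) :=
    fun w hw q hq => ⟨(hM w hw).1.left_mem q hq, (hM w hw).1.right_mem q hq⟩
  refine ⟨singleton_mem_X u, ?_⟩
  rintro p (⟨σ', hv', hσ', hins', rfl⟩ | ⟨u'', hu'', q, hq, rfl⟩ | ⟨u'', hu'', hnu'', rfl⟩) <;>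
    dsimp only <;> constructor
  · rintro rfl
    exact (mem_indepComplex.1 hins').2 v (Finset.mem_insert_self v _) u
      (Finset.mem_insert_of_mem (Finset.mem_singleton_self u)) hadj
  · intro h
    have hvu : v = u := by
      have : v ∈ ({u} : Finset V) := by rw [← h]; exact Finset.mem_insert_self v σ'
      exact Finset.mem_singleton.1 this
    exact G.irrefl (hvu ▸ hadj)
  · intro h
    have h2 := (card_lift (hXu u'' hu'' q hq).1).2
    rw [h] at h2
    simp at h2
  · intro h
    have h2 := (card_lift (hXu u'' hu'' q hq).2).2
    rw [h] at h2
    simp at h2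
  · intro h
    exact hnu'' ((Finset.singleton_injective h) ▸ hUu)
  · intro h
    have hcard2 : ({u'', auxA G M u''} : Finset V).card = 2 := by
      rw [show ({u'', auxA G M u''} : Finset V) = insert u'' {auxA G M u''} from rfl,
        Finset.card_insert_of_notMem (by simp [Ne.symm (auxA_ne hM hu'' hnu'')])]
      simp
    rw [h] at hcard2
    simp at hcard2

omit hM in
/-- any face with no neighbour of `v` other than possibly itself... is matched unless it is {v} -/
lemma noncrit_sector_empty {σ : Finset V} (hσ : σ ∈ indepComplex G)
    (hno : ∀ x ∈ σ, ¬ G.Adj v x) (hne : σ ≠ {v}) :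
    ¬ IsCritical (indepComplex G) (bigW G v M) σ := by
  intro hcrit
  by_cases hv : v ∈ σ
  · have hτ : σ.erase v ∈ indepComplex G := by
      refine avoidIndep_mono hσ (Finset.erase_subset v σ) (erase_nonempty_of_mem_ne hv hne)
    have hmem : (σ.erase v, σ) ∈ bigW G v M := by
      refine Or.inl ⟨σ.erase v, Finset.notMem_erase v σ, hτ, ?_, ?_⟩
      · rw [Finset.insert_erase hv]; exact hσ
      · rw [Finset.insert_erase hv]
    exact (hcrit.2 _ hmem).2 rfl
  · have hins : insert v σ ∈ indepComplex G := by
      refine mem_indepComplex.2 ⟨Finset.insert_nonempty v σ, ?_⟩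
      intro x hx y hy hadj
      rcases Finset.mem_insert.1 hx with hxv | hx'
      · rcases Finset.mem_insert.1 hy with hyv | hy'
        · exact G.irrefl (hxv ▸ hyv ▸ hadj)
        · exact hno y hy' (hxv ▸ hadj)
      · rcases Finset.mem_insert.1 hy with hyv | hy'
        · exact hno x hx' (hyv ▸ hadj).symm
        · exact (mem_indepComplex.1 hσ).2 x hx' y hy' hadj
    have hmem : (σ, insert v σ) ∈ bigW G v M := Or.inl ⟨σ, hv, hσ, hins, rfl⟩
    exact (hcrit.2 _ hmem).1 rfl

lemma crit0_eq (h2 : closedNbhd G v ⊂ Set.univ) :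
    {σ : Finset V | IsCritical (indepComplex G) (bigW G v M) σ ∧ σ.card = 0 + 1}
      = insert {v} ((fun u => ({u} : Finset V)) '' {u | IsUniversal G u}) := by
  ext σ
  simp only [Set.mem_setOf_eq, Set.mem_insert_iff, Set.mem_image]
  constructor
  · rintro ⟨hcrit, hcard⟩
    obtain ⟨x, rfl⟩ := Finset.card_eq_one.1 hcard
    by_cases hxv : x = v
    · exact Or.inl (by rw [hxv])
    · by_cases hadj : G.Adj v x
      · by_cases hUx : IsUniversal G x
        · exact Or.inr ⟨x, hUx, rfl⟩
        · exact absurd ((hcrit.2 _ (special_mem_bigW hadj hUx)).1 rfl) id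
      · exfalso
        refine noncrit_sector_empty (singleton_mem_X x) ?_ ?_ hcrit
        · intro y hy
          rw [Finset.mem_singleton.1 hy]
          exact hadj
        · intro h
          exact hxv (Finset.singleton_injective h)
  · rintro (rfl | ⟨u, hUu, rfl⟩)
    · exact ⟨crit_v, Finset.card_singleton v⟩
    · exact ⟨crit_univ hM (universal_adj h2 hUu) hUu, Finset.card_singleton u⟩

omit hclique hM in
lemma Xu_empty {u : V} (hUu : IsUniversal G u) : avoidIndep G (closedNbhd G u) = ∅ := by
  ext s
  simp only [Set.mem_empty_iff_false, iff_false]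
  intro hs
  obtain ⟨hne, havoid, -⟩ := mem_avoidIndepC.1 hs
  obtain ⟨x, hx⟩ := hne
  obtain ⟨h1, h2⟩ := havoid x hx
  exact h2 (hUu x h1)

include hclique in
lemma crit_sector_iff {u : V} (hadj : G.Adj v u) {τ : Finset V}
    (hτ : τ ∈ avoidIndep G (closedNbhd G u)) :
    IsCritical (indepComplex G) (bigW G v M) (insert u τ) ↔
      (IsCritical (avoidIndep G (closedNbhd G u)) (M u) τ ∧
        (¬ IsUniversal G u → insert u τ ≠ ({u, auxA G M u} : Finset V))) := by
  have hXu : ∀ w, w ∈ G.neighborSet v → ∀ q ∈ M w,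
      q.1 ∈ avoidIndep G (closedNbhd G w) ∧ q.2 ∈ avoidIndep G (closedNbhd G w) :=
    fun w hw q hq => ⟨(hM w hw).1.left_mem q hq, (hM w hw).1.right_mem q hq⟩
  have husec := lift_sector hclique hadj hτ
  have hun : u ∉ τ := u_not_mem_of_memXu hτ
  constructor
  · intro hcrit
    refine ⟨⟨hτ, ?_⟩, ?_⟩
    · intro q hq
      constructor
      · intro h
        refine (hcrit.2 (insert u q.1, insert u q.2)
          (Or.inr (Or.inl ⟨u, hadj, q, hq, rfl⟩))).1 ?_
        dsimp only
        rw [h]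
      · intro h
        refine (hcrit.2 (insert u q.1, insert u q.2)
          (Or.inr (Or.inl ⟨u, hadj, q, hq, rfl⟩))).2 ?_
        dsimp only
        rw [h]
    · intro hnu h
      exact (hcrit.2 _ (special_mem_bigW hadj hnu)).2 h.symm
  · rintro ⟨hτcrit, hcond⟩
    refine ⟨insert_mem_X_of_memXu hτ, ?_⟩
    rintro p (⟨σ', hv', hσ', hins', rfl⟩ | ⟨u'', hu'', q, hq, rfl⟩ | ⟨u'', hu'', hnu'', rfl⟩) <;>
      dsimp only <;> constructor
    · intro h
      refine vpair_no_nbr hins' u ?_ hadj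
      rw [h]
      exact Finset.mem_insert_of_mem (Finset.mem_insert_self u τ)
    · intro h
      refine vpair_no_nbr hins' u ?_ hadj
      rw [h]
      exact Finset.mem_insert_self u τ
    · intro h
      have hu2 : u'' = u := by
        refine husec u'' ?_ (hu'' : G.Adj v u'')
        rw [← h]; exact Finset.mem_insert_self u'' q.1
      rw [hu2] at h hq
      exact (hτcrit.2 q hq).1 (insert_cancel (u_not_mem_of_memXu (hXu u hadj q hq).1) hun h)
    · intro h
      have hu2 : u'' = u := by
        refine husec u'' ?_ (hu'' : G.Adj v u'')
        rw [← h]; exact Finset.mem_insert_self u'' q.2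
      rw [hu2] at h hq
      exact (hτcrit.2 q hq).2 (insert_cancel (u_not_mem_of_memXu (hXu u hadj q hq).2) hun h)
    · intro h
      have h2 := (card_lift hτ).2
      rw [← h] at h2
      simp at h2
    · intro h
      have hu2 : u'' = u := by
        refine husec u'' ?_ (hu'' : G.Adj v u'')
        rw [← h]; exact Finset.mem_insert_self u'' _
      rw [hu2] at h hnu''
      exact hcond hnu'' h.symm

include hclique in
lemma critset_eq (t : ℕ) (ht : 1 ≤ t) :
    {σ : Finset V | IsCritical (indepComplex G) (bigW G v M) σ ∧ σ.card = t + 1} =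
      ⋃ u ∈ G.neighborFinset v, (insert u) ''
        {τ : Finset V | (IsCritical (avoidIndep G (closedNbhd G u)) (M u) τ ∧ τ.card = t) ∧
          (¬ IsUniversal G u → insert u τ ≠ ({u, auxA G M u} : Finset V))} := by
  ext σ
  simp only [Set.mem_setOf_eq, Set.mem_iUnion, Set.mem_image, exists_prop]
  constructor
  · rintro ⟨hcrit, hcard⟩
    have hσX := hcrit.1
    have hnbr : ∃ u ∈ σ, G.Adj v u := by
      by_contra hno
      push_neg at hno
      refine noncrit_sector_empty hσX hno ?_ hcrit
      intro h
      rw [h] at hcard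
      simp at hcard
      omega
    obtain ⟨u, huσ, hadj⟩ := hnbr
    have hσne : σ ≠ {u} := by
      intro h
      rw [h] at hcard
      simp at hcard
      omega
    have hτ : σ.erase u ∈ avoidIndep G (closedNbhd G u) := erase_mem_Xu hclique hσX huσ hσne
    have hins : insert u (σ.erase u) = σ := Finset.insert_erase huσ
    refine ⟨u, (SimpleGraph.mem_neighborFinset _ _ _).2 hadj, σ.erase u, ⟨⟨?_, ?_⟩, ?_⟩, hins⟩
    · exact ((crit_sector_iff hclique hM hadj hτ).1 (by rw [hins]; exact hcrit)).1
    · rw [Finset.card_erase_of_mem huσ, hcard]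
      omega
    · exact ((crit_sector_iff hclique hM hadj hτ).1 (by rw [hins]; exact hcrit)).2
  · rintro ⟨u, hu, τ, ⟨⟨hτcrit, hτcard⟩, hcond⟩, rfl⟩
    have hadj : G.Adj v u := (SimpleGraph.mem_neighborFinset _ _ _).1 hu
    refine ⟨(crit_sector_iff hclique hM hadj hτcrit.1).2 ⟨hτcrit, hcond⟩, ?_⟩
    rw [Finset.card_insert_of_notMem (u_not_mem_of_memXu hτcrit.1), hτcard]

omit hclique hM in
lemma comp_count (h2 : closedNbhd G v ⊂ Set.univ)
    (hclique : ∀ x ∈ closedNbhd G v, ∀ y ∈ closedNbhd G v, x ≠ y → G.Adj x y) :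
    Nat.card (Gᶜ.ConnectedComponent) = 1 + {u : V | IsUniversal G u}.ncard := by
  classical
  have hvnu := v_not_universal h2
  have hiso : ∀ u : V, IsUniversal G u → ∀ x, ¬ (Gᶜ).Adj u x := by
    intro u hu x hadj
    rw [SimpleGraph.compl_adj] at hadj
    exact hadj.2 (hu x (Ne.symm hadj.1))
  have hreach : ∀ u, IsUniversal G u → ∀ w, (Gᶜ).Reachable u w → u = w := by
    intro u hu w hr
    obtain ⟨p⟩ := hr
    cases p with
    | nil => rfl
    | cons h _ => exact absurd h (hiso u hu _)
  let f : Option {u : V // IsUniversal G u} → (Gᶜ).ConnectedComponent := fun o =>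
    match o with
    | none => (Gᶜ).connectedComponentMk v
    | some u => (Gᶜ).connectedComponentMk u.1
  have hbij : Function.Bijective f := by
    constructor
    · rintro (_ | ⟨u, hu⟩) (_ | ⟨w, hw⟩) h
      · rfl
      · exfalso
        have hwv := hreach w hw v (SimpleGraph.ConnectedComponent.eq.1 h.symm)
        rw [hwv] at hw
        exact hvnu hw
      · exfalso
        have huv := hreach u hu v (SimpleGraph.ConnectedComponent.eq.1 h)
        rw [huv] at hu
        exact hvnu hu
      · have := hreach u hu w (SimpleGraph.ConnectedComponent.eq.1 h)
        simp only [Option.some.injEq]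
        exact Subtype.ext this
    · intro C
      induction C using SimpleGraph.ConnectedComponent.ind with
      | _ w =>
        by_cases hw : IsUniversal G w
        · exact ⟨some ⟨w, hw⟩, rfl⟩
        · refine ⟨none, ?_⟩
          show (Gᶜ).connectedComponentMk v = (Gᶜ).connectedComponentMk w
          rw [SimpleGraph.ConnectedComponent.eq]
          by_cases hwv : w = v
          · rw [hwv]
          · by_cases hadj : G.Adj v w
            · -- w is a non-universal neighbour of v
              rw [IsUniversal] at hw
              push_neg at hw
              obtain ⟨z, hzw, hnadj⟩ := hw
              have hzv : z ≠ v := by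
                rintro rfl
                exact hnadj hadj.symm
              have hznadj : ¬ G.Adj v z := by
                intro h
                exact hnadj (hclique w (Or.inr hadj) z (Or.inr h) (Ne.symm hzw))
              have e1 : (Gᶜ).Adj v z := by
                rw [SimpleGraph.compl_adj]
                exact ⟨Ne.symm hzv, hznadj⟩
              have e2 : (Gᶜ).Adj z w := by
                rw [SimpleGraph.compl_adj]
                refine ⟨hzw, ?_⟩
                intro h
                exact hnadj h.symm
              exact (e1.reachable).trans e2.reachable
            · exact SimpleGraph.Adj.reachable (by
                rw [SimpleGraph.compl_adj]
                exact ⟨fun h => hwv h.symm, hadj⟩)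
  rw [← Nat.card_congr (Equiv.ofBijective f hbij), Finite.card_option]
  rw [Nat.add_comm]
  have he : Nat.card { u : V // IsUniversal G u } = {u : V | IsUniversal G u}.ncard := by
    rw [← Nat.card_coe_set_eq]
    rfl
  rw [he]

omit hclique hM in
lemma Tset_two_le {u : V} (t : ℕ) (ht : 2 ≤ t) :
    {τ : Finset V | (IsCritical (avoidIndep G (closedNbhd G u)) (M u) τ ∧ τ.card = t) ∧
      (¬ IsUniversal G u → insert u τ ≠ ({u, auxA G M u} : Finset V))} =
    {τ : Finset V | IsCritical (avoidIndep G (closedNbhd G u)) (M u) τ ∧ τ.card = t} := by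
  ext τ
  simp only [Set.mem_setOf_eq]
  constructor
  · rintro ⟨h, -⟩
    exact h
  · rintro ⟨h1, h2⟩
    refine ⟨⟨h1, h2⟩, fun hnu he => ?_⟩
    have hcard1 : (insert u τ).card = t + 1 := by
      rw [Finset.card_insert_of_notMem (u_not_mem_of_memXu h1.1), h2]
    rw [he] at hcard1
    have hle : ({u, auxA G M u} : Finset V).card ≤ 2 :=
      (Finset.card_insert_le _ _).trans (by simp)
    omega

include hclique in
lemma critcount_t (t : ℕ) (ht : 1 ≤ t) :
    {σ : Finset V | IsCritical (indepComplex G) (bigW G v M) σ ∧ σ.card = t + 1}.ncard =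
      ∑ u ∈ G.neighborFinset v,
        {τ : Finset V | (IsCritical (avoidIndep G (closedNbhd G u)) (M u) τ ∧ τ.card = t) ∧
          (¬ IsUniversal G u → insert u τ ≠ ({u, auxA G M u} : Finset V))}.ncard := by
  rw [critset_eq hclique hM t ht, myncard_biUnion _ _ ?hdisj]
  · refine Finset.sum_congr rfl fun u hu => ?_
    refine Set.ncard_image_of_injOn ?_
    intro τ1 h1 τ2 h2 he
    exact insert_cancel (u_not_mem_of_memXu h1.1.1.1) (u_not_mem_of_memXu h2.1.1.1) he
  case hdisj =>
    intro a ha b hb hab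
    rw [Set.disjoint_left]
    rintro σ ⟨τ, hτ, rfl⟩ ⟨τ', hτ', he'⟩
    have hadja : G.Adj v a := (SimpleGraph.mem_neighborFinset _ _ _).1 ha
    have hadjb : G.Adj v b := (SimpleGraph.mem_neighborFinset _ _ _).1 hb
    have hbmem : b ∈ insert a τ := by rw [← he']; exact Finset.mem_insert_self b τ'
    exact hab (lift_sector hclique hadja hτ.1.1.1 b hbmem hadjb).symm

open Classical in
include hclique in
lemma Tset_one_count {u : V} (hadj : G.Adj v u) :
    ({τ : Finset V | (IsCritical (avoidIndep G (closedNbhd G u)) (M u) τ ∧ τ.card = 1) ∧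
      (¬ IsUniversal G u → insert u τ ≠ ({u, auxA G M u} : Finset V))}.ncard : ℤ)
      = (critCount (avoidIndep G (closedNbhd G u)) (M u) 0 : ℤ)
        - (if IsUniversal G u then 0 else 1) := by
  by_cases hUu : IsUniversal G u
  · rw [if_pos hUu]
    have h1 : {τ : Finset V | (IsCritical (avoidIndep G (closedNbhd G u)) (M u) τ ∧ τ.card = 1) ∧
        (¬ IsUniversal G u → insert u τ ≠ ({u, auxA G M u} : Finset V))} = ∅ := by
      ext τ
      simp only [Set.mem_setOf_eq, Set.mem_empty_iff_false, iff_false]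
      rintro ⟨⟨h1, -⟩, -⟩
      rw [Xu_empty hUu] at h1
      exact h1.1
    have h2 : critCount (avoidIndep G (closedNbhd G u)) (M u) 0 = 0 := by
      rw [critCount]
      convert Set.ncard_empty (Finset V)
      ext τ
      simp only [Set.mem_setOf_eq, Set.mem_empty_iff_false, iff_false]
      rintro ⟨h1, -⟩
      rw [Xu_empty hUu] at h1
      exact h1.1
    rw [h1, h2]
    simp
  · rw [if_neg hUu]
    have hcrit := auxA_spec hM hadj hUu
    have hun' : u ∉ ({auxA G M u} : Finset V) := by simp [Ne.symm (auxA_ne hM hadj hUu)]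
    have hset : {τ : Finset V | (IsCritical (avoidIndep G (closedNbhd G u)) (M u) τ ∧ τ.card = 1) ∧
        (¬ IsUniversal G u → insert u τ ≠ ({u, auxA G M u} : Finset V))}
        = {τ : Finset V | IsCritical (avoidIndep G (closedNbhd G u)) (M u) τ ∧ τ.card = 0 + 1}
          \ {({auxA G M u} : Finset V)} := by
      ext τ
      simp only [Set.mem_setOf_eq, Set.mem_diff, Set.mem_singleton_iff]
      constructor
      · rintro ⟨⟨h1, h2⟩, h3⟩
        refine ⟨⟨h1, h2⟩, fun he => h3 hUu ?_⟩
        rw [he]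
      · rintro ⟨⟨h1, h2⟩, h3⟩
        exact ⟨⟨h1, h2⟩, fun _ hins =>
          h3 (insert_cancel (u_not_mem_of_memXu h1.1) hun' hins)⟩
    have hmem : ({auxA G M u} : Finset V) ∈
        {τ : Finset V | IsCritical (avoidIndep G (closedNbhd G u)) (M u) τ ∧ τ.card = 0 + 1} :=
      ⟨hcrit, by simp⟩
    have hpos : 0 < {τ : Finset V | IsCritical (avoidIndep G (closedNbhd G u)) (M u) τ ∧
        τ.card = 0 + 1}.ncard := (Set.ncard_pos (Set.toFinite _)).2 ⟨_, hmem⟩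
    rw [hset, Set.ncard_diff_singleton_of_mem hmem, critCount]
    rw [Nat.cast_sub (by omega)]
    simp

end Main


set_option maxHeartbeats 1000000 in
theorem stmt_6 {V : Type*} [Fintype V] [DecidableEq V] (G : SimpleGraph V)
    [DecidableRel G.Adj] (v : V)
    (h1 : ({v} : Set V) ⊂ closedNbhd G v) (h2 : closedNbhd G v ⊂ Set.univ)
    (hclique : ∀ x ∈ closedNbhd G v, ∀ y ∈ closedNbhd G v, x ≠ y → G.Adj x y)
    (M : V → Set (Finset V × Finset V))
    (hM : ∀ u ∈ G.neighborSet v,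
      IsAcyclicMatching (avoidIndep G (closedNbhd G u)) (M u)) :
    ∃ W, IsAcyclicMatching (indepComplex G) W ∧
      (critCount (indepComplex G) W 0 = 1 + {u | IsUniversal G u}.ncard ∧
        1 + {u | IsUniversal G u}.ncard = Nat.card Gᶜ.ConnectedComponent) ∧
      ((critCount (indepComplex G) W 1 : ℤ) =
        (∑ u ∈ G.neighborFinset v,
            (critCount (avoidIndep G (closedNbhd G u)) (M u) 0 : ℤ)) -
          (((G.neighborFinset v).card : ℤ) - ({u | IsUniversal G u}.ncard : ℤ))) ∧
      ∀ t, 2 ≤ t → critCount (indepComplex G) W t =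
        ∑ u ∈ G.neighborFinset v, critCount (avoidIndep G (closedNbhd G u)) (M u) (t - 1) := by
  classical
  refine ⟨bigW G v M, ⟨bigW_isMatching hclique hM, bigW_acyclic hclique hM⟩,
    ⟨?_, (comp_count h2 hclique).symm⟩, ?_, ?_⟩
  · -- dimension 0
    rw [critCount, crit0_eq hM h2,
      Set.ncard_insert_of_notMem ?_ (Set.toFinite _),
      Set.ncard_image_of_injective _ Finset.singleton_injective, Nat.add_comm]
    rintro ⟨u, hu, h⟩
    have huv : u = v := Finset.singleton_injective h
    rw [huv] at hu
    exact v_not_universal h2 hu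
  · -- dimension 1
    have hA := critcount_t hclique hM 1 le_rfl
    rw [critCount, hA, Nat.cast_sum,
      Finset.sum_congr rfl (fun u hu =>
        Tset_one_count hclique hM ((SimpleGraph.mem_neighborFinset _ _ _).1 hu)),
      Finset.sum_sub_distrib]
    congr 1
    have hrw : ∀ u ∈ G.neighborFinset v, (if IsUniversal G u then (0:ℤ) else 1)
        = (if ¬ IsUniversal G u then (1:ℤ) else 0) := by
      intro u _
      by_cases h : IsUniversal G u <;> simp [h]
    rw [Finset.sum_congr rfl hrw, Finset.sum_boole]
    have hk : {u : V | IsUniversal G u}.ncard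
        = ((G.neighborFinset v).filter (fun u => IsUniversal G u)).card := by
      rw [show {u : V | IsUniversal G u}
          = ↑((G.neighborFinset v).filter (fun u => IsUniversal G u)) from ?_,
        Set.ncard_coe_finset]
      ext u
      simp only [Finset.coe_filter, Set.mem_setOf_eq, SimpleGraph.mem_neighborFinset]
      exact ⟨fun hu => ⟨universal_adj h2 hu, hu⟩, fun h => h.2⟩
    rw [hk]
    have hsplit := Finset.card_filter_add_card_filter_not
      (s := G.neighborFinset v) (p := fun u => IsUniversal G u)
    push_cast
    omega
  · -- dimension ≥ 2
    intro t ht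
    have hA := critcount_t hclique hM t (by omega)
    rw [critCount, hA]
    refine Finset.sum_congr rfl fun u hu => ?_
    have hadj : G.Adj v u := (SimpleGraph.mem_neighborFinset _ _ _).1 hu
    rw [Tset_two_le t ht, critCount, show t - 1 + 1 = t from by omega]
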